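/- Let q be a prime power and let c, d, k, v, y1, y2 be integers with d even, 2 ≤ d/2 ≤ k ≤ v/2, 0 ≤ c ≤ k − d/2 − 1, 0 ≤ y1 ≤ d/2, 0 ≤ y2 ≤ d/2, 2 ≤ v − k, and either y2 = y1 or y2 = y1 − 1 ≥ 0. Then ([v−k choose y1]_q · [k choose c]_q / ([k−d/2 choose c]_q · [d/2 choose y1]_q)) · q^{c(v−k−d/2)} ≤ ([v−k choose y2]_q · [k choose c+1]_q / ([k−d/2 choose c+1]_q · [d/2 choose y2]_q)) · q^{(c+1)(v−k−d/2)}. -/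

import Mathlib

open Module

/-- The subspace of `F_q^v` of vectors whose first `k` coordinates vanish
(denoted `Γ` in the paper); its complement (as a set of vectors) is `Δ`. -/
def Gamma (K : Type) [Field K] (k v : ℕ) : Submodule K (Fin v → K) where
  carrier := {x | ∀ j : Fin v, (j : ℕ) < k → x j = 0}
  add_mem' := by
    intro a b ha hb j hj
    simp [ha j hj, hb j hj]
  zero_mem' := by
    intro j hj
    rfl
  smul_mem' := by
    intro c x hx j hj
    simp [hx j hj]

/-- The subspace distance `d_S(U,W) = dim(U+W) - dim(U ∩ W)`. -/
noncomputable def sDist {K : Type} [Field K] {v : ℕ}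
    (U W : Submodule K (Fin v → K)) : ℕ :=
  finrank K ↥(U ⊔ W) - finrank K ↥(U ⊓ W)

/-- A constant dimension code of dimension `k` and minimum subspace distance `d`. -/
def IsCDC (K : Type) [Field K] (v : ℕ) (d k : ℤ)
    (C : Set (Submodule K (Fin v → K))) : Prop :=
  (∀ U ∈ C, (finrank K U : ℤ) = k) ∧
  ∀ U ∈ C, ∀ W ∈ C, U ≠ W → d ≤ (sDist U W : ℤ)

/-- `A_q(v,d;k)`: the maximum cardinality of a `(v,M,d;k)_q` CDC. -/
noncomputable def Amax (K : Type) [Field K] (v : ℕ) (d k : ℤ) : ℕ :=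
  sSup {n | ∃ C : Set (Submodule K (Fin v → K)), IsCDC K v d k C ∧ C.ncard = n}

/-- Row `i` of the `k × v` matrix `(I_k | A)`. -/
def liftRow {K : Type} [Field K] {k v : ℕ} (A : Matrix (Fin k) (Fin (v - k)) K)
    (i : Fin k) : Fin v → K := fun j =>
  if (j : ℕ) < k then (if (i : ℕ) = (j : ℕ) then 1 else 0)
  else if h2 : (j : ℕ) - k < v - k then A i ⟨(j : ℕ) - k, h2⟩ else 0

/-- `M` is a `(v,d;k)_q` lifted MRD code: `M = { rowspan (I_k | A) : A ∈ R }`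
for a `[k × (v-k), q^((v-k)(k-d/2+1)), d/2]_q` rank metric code `R`. -/
def IsLMRD (q : ℕ) (K : Type) [Field K] (v d k : ℕ)
    (M : Set (Submodule K (Fin v → K))) : Prop :=
  ∃ R : Set (Matrix (Fin k) (Fin (v - k)) K),
    R.ncard = q ^ ((v - k) * (k - d / 2 + 1)) ∧
    (∀ A ∈ R, ∀ B ∈ R, A ≠ B → d / 2 ≤ (A - B).rank) ∧
    M = {U | ∃ A ∈ R, U = Submodule.span K (Set.range (liftRow A))}

/-- The Gaussian binomial coefficient `[a choose b]_q`, defined to be `0`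
unless `0 ≤ b ≤ a`. -/
noncomputable def qBin (q : ℕ) (a b : ℤ) : ℚ :=
  if 0 ≤ b ∧ b ≤ a then
    ∏ i ∈ Finset.range b.toNat,
      ((q : ℚ) ^ a - (q : ℚ) ^ (i : ℤ)) / ((q : ℚ) ^ b - (q : ℚ) ^ (i : ℤ))
  else 0

/-- `[[w, u; c]]_q = q^(u*c) * [w-u choose c]_q` for `0 ≤ c ≤ w-u`, else `0`. -/
noncomputable def qBinD (q : ℕ) (w u c : ℤ) : ℚ :=
  if 0 ≤ c ∧ c ≤ w - u then (q : ℚ) ^ (u * c) * qBin q (w - u) c else 0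



lemma qBin_pos {q : ℕ} (hq : 1 < (q:ℚ)) {a b : ℤ} (hb : 0 ≤ b) (hba : b ≤ a) :
    0 < qBin q a b := by
  rw [qBin, if_pos ⟨hb, hba⟩]
  apply Finset.prod_pos
  intro i hi
  rw [Finset.mem_range] at hi
  have hib : (i : ℤ) < b := by omega
  apply div_pos <;> rw [sub_pos] <;> exact zpow_lt_zpow_right₀ hq (by omega)

lemma qBin_mul_den {q : ℕ} (hq : 1 < (q:ℚ)) {a b : ℤ} (hb : 0 ≤ b) (hba : b ≤ a) :
    qBin q a b * ∏ i ∈ Finset.range b.toNat, ((q:ℚ) ^ b - (q:ℚ) ^ (i:ℤ))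
      = ∏ i ∈ Finset.range b.toNat, ((q:ℚ) ^ a - (q:ℚ) ^ (i:ℤ)) := by
  rw [qBin, if_pos ⟨hb, hba⟩, Finset.prod_div_distrib]
  apply div_mul_cancel₀
  apply ne_of_gt
  apply Finset.prod_pos
  intro i hi
  rw [Finset.mem_range] at hi
  rw [sub_pos]
  exact zpow_lt_zpow_right₀ hq (by omega)

lemma den_succ {q : ℕ} (hq : 1 < (q:ℚ)) {b : ℤ} (hb : 0 ≤ b) :
    ∏ i ∈ Finset.range (b+1).toNat, ((q:ℚ) ^ (b+1) - (q:ℚ) ^ (i:ℤ))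
      = (∏ i ∈ Finset.range b.toNat, ((q:ℚ) ^ b - (q:ℚ) ^ (i:ℤ)))
        * ((q:ℚ) ^ b * ((q:ℚ) ^ (b+1) - 1)) := by
  have hq0 : (q:ℚ) ≠ 0 := by positivity
  have h1 : (b + 1).toNat = b.toNat + 1 := by omega
  rw [h1, Finset.prod_range_succ']
  have h2 : ∀ i ∈ Finset.range b.toNat,
      ((q:ℚ) ^ (b+1) - (q:ℚ) ^ ((i+1 : ℕ):ℤ)) = (q:ℚ) * ((q:ℚ) ^ b - (q:ℚ) ^ (i:ℤ)) := by
    intro i hi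
    push_cast
    rw [zpow_add₀ hq0, zpow_add₀ hq0, zpow_one]
    ring
  rw [Finset.prod_congr rfl h2, Finset.prod_mul_distrib, Finset.prod_const]
  have h3 : (q:ℚ) ^ b.toNat = (q:ℚ) ^ b := by
    rw [← zpow_natCast]
    congr 1
    omega
  simp only [Nat.cast_zero, zpow_zero, Finset.card_range]
  rw [h3]
  ring

lemma qBin_succ_mul {q : ℕ} (hq : 1 < (q:ℚ)) {a b : ℤ} (hb : 0 ≤ b) (hba : b + 1 ≤ a) :
    qBin q a (b + 1) * ((q:ℚ) ^ b * ((q:ℚ) ^ (b+1) - 1))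
      = qBin q a b * ((q:ℚ) ^ a - (q:ℚ) ^ b) := by
  have key1 := qBin_mul_den hq (show (0:ℤ) ≤ b + 1 by omega) hba
  have key2 := qBin_mul_den hq hb (by omega : b ≤ a)
  rw [den_succ hq hb] at key1
  have h1 : (b + 1).toNat = b.toNat + 1 := by omega
  rw [h1, Finset.prod_range_succ] at key1
  have h2 : ((b.toNat : ℕ) : ℤ) = b := Int.toNat_of_nonneg hb
  rw [h2] at key1
  -- key1 : qBin q a (b+1) * (D * (Q^b * (Q^(b+1)-1))) = D' * (Q^a - Q^b)
  -- key2 : qBin q a b * D = D'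
  have hD : 0 < ∏ i ∈ Finset.range b.toNat, ((q:ℚ) ^ b - (q:ℚ) ^ (i:ℤ)) := by
    apply Finset.prod_pos
    intro i hi
    rw [Finset.mem_range] at hi
    rw [sub_pos]
    exact zpow_lt_zpow_right₀ hq (by omega)
  rw [← key2] at key1
  apply mul_right_cancel₀ hD.ne'
  linear_combination key1


lemma stmt16_key (X1 X2 A1 A2 B1 B2 Y1 Y2 e f p s ka kb kx ky : ℚ)
    (hX2 : 0 < X2) (hA1 : 0 < A1) (hB1 : 0 < B1) (hB2 : 0 < B2)
    (hY1 : 0 < Y1) (hY2 : 0 < Y2) (he : 0 < e) (hf : 0 < f)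
    (hp : 0 < p) (hs : 0 < s)
    (hA : A2 * e = A1 * ka) (hB : B2 * e = B1 * kb)
    (hX : X1 * f = X2 * kx) (hY : Y1 * f = Y2 * ky)
    (hmain : kx * kb ≤ ky * ka * s) :
    X1 * A1 / (B1 * Y1) * p ≤ X2 * A2 / (B2 * Y2) * (p * s) := by
  rw [div_mul_eq_mul_div, div_mul_eq_mul_div,
    div_le_div_iff₀ (by positivity) (by positivity)]
  have hef : 0 < e * f := by positivity
  rw [← mul_le_mul_iff_of_pos_right hef]
  calc X1 * A1 * p * (B2 * Y2) * (e * f)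
      = (X2 * A1 * p * B1 * Y2) * (kx * kb) := by
        linear_combination (B2 * e * A1 * p * Y2) * hX + (X2 * kx * A1 * p * Y2) * hB
    _ ≤ (X2 * A1 * p * B1 * Y2) * (ky * ka * s) :=
        mul_le_mul_of_nonneg_left hmain (by positivity)
    _ = X2 * A2 * (p * s) * (B1 * Y1) * (e * f) := by
        linear_combination (-(X2 * p * s * B1 * Y1 * f)) * hA + (-(X2 * A1 * ka * p * s * B1)) * hY

/-- the second summand of Proposition 2 is monotonically
increasing in `c`. -/
theorem stmt16 (q : ℕ) (hq : IsPrimePow q) (c d k v y1 y2 : ℤ)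
    (hd : Even d) (hd2 : 2 ≤ d / 2) (hdk : d / 2 ≤ k) (hkv : 2 * k ≤ v)
    (hc0 : 0 ≤ c) (hc1 : c ≤ k - d / 2 - 1)
    (hy1a : 0 ≤ y1) (hy1b : y1 ≤ d / 2) (hy2a : 0 ≤ y2) (hy2b : y2 ≤ d / 2)
    (hvk : 2 ≤ v - k) (hyy : y2 = y1 ∨ (y2 = y1 - 1 ∧ 0 ≤ y2)) :
    qBin q (v - k) y1 * qBin q k c / (qBin q (k - d / 2) c * qBin q (d / 2) y1)
        * (q : ℚ) ^ (c * (v - k - d / 2))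
      ≤ qBin q (v - k) y2 * qBin q k (c + 1)
          / (qBin q (k - d / 2) (c + 1) * qBin q (d / 2) y2)
          * (q : ℚ) ^ ((c + 1) * (v - k - d / 2)) := by
  have hq2 : 2 ≤ q := hq.two_le
  have hQ : 1 < (q:ℚ) := by exact_mod_cast Nat.lt_of_lt_of_le Nat.one_lt_two hq2
  have hQ2 : (2:ℚ) ≤ (q:ℚ) := by exact_mod_cast hq2
  have hq0 : (q:ℚ) ≠ 0 := by positivity
  have hQ1 : (1:ℚ) ≤ (q:ℚ) := hQ.le
  set m : ℤ := d / 2 with hm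
  have hkv' : k ≤ v - k := by omega
  have hmk : m ≤ v - k := by omega
  have hs0 : 0 ≤ v - k - m := by omega
  have hsQ : (1:ℚ) ≤ (q:ℚ) ^ (v - k - m) := by
    calc (1:ℚ) = (q:ℚ) ^ (0:ℤ) := (zpow_zero _).symm
      _ ≤ (q:ℚ) ^ (v - k - m) := zpow_le_zpow_right₀ hQ1 hs0
  have hexp : (c + 1) * (v - k - m) = c * (v - k - m) + (v - k - m) := by ring
  rw [hexp, zpow_add₀ hq0]
  have hA := qBin_succ_mul hQ hc0 (show c + 1 ≤ k by omega)
  have hB := qBin_succ_mul hQ hc0 (show c + 1 ≤ k - m by omega)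
  have hka0 : (0:ℚ) ≤ (q:ℚ) ^ k - (q:ℚ) ^ c :=
    sub_nonneg.mpr (zpow_le_zpow_right₀ hQ1 (by omega))
  have hkb0 : (0:ℚ) ≤ (q:ℚ) ^ (k - m) - (q:ℚ) ^ c :=
    sub_nonneg.mpr (zpow_le_zpow_right₀ hQ1 (by omega))
  have he : (0:ℚ) < (q:ℚ) ^ c * ((q:ℚ) ^ (c+1) - 1) := by
    have h1 : (1:ℚ) < (q:ℚ) ^ (c+1) := by
      calc (1:ℚ) = (q:ℚ) ^ (0:ℤ) := (zpow_zero _).symm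
        _ < (q:ℚ) ^ (c+1) := zpow_lt_zpow_right₀ hQ (by omega)
    have h2 : (0:ℚ) < (q:ℚ) ^ c := zpow_pos (by positivity) _
    nlinarith
  rcases hyy with h | ⟨h, hy2c⟩
  · subst h
    apply stmt16_key _ _ _ _ _ _ _ _ ((q:ℚ) ^ c * ((q:ℚ) ^ (c+1) - 1)) 1 _ _
      ((q:ℚ) ^ k - (q:ℚ) ^ c) ((q:ℚ) ^ (k - m) - (q:ℚ) ^ c) 1 1
      (qBin_pos hQ hy2a (by omega)) (qBin_pos hQ hc0 (by omega))
      (qBin_pos hQ hc0 (by omega)) (qBin_pos hQ (by omega) (by omega))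
      (qBin_pos hQ hy2a hy2b) (qBin_pos hQ hy2a hy2b)
      he one_pos (zpow_pos (by positivity) _) (zpow_pos (by positivity) _)
      hA hB (by ring) (by ring)
    -- 1 * kb ≤ 1 * ka * s
    have hk1 : (q:ℚ) ^ (k - m) ≤ (q:ℚ) ^ k := zpow_le_zpow_right₀ hQ1 (by omega)
    nlinarith [mul_nonneg hka0 (sub_nonneg.mpr hsQ)]
  · have hy1 : y1 = y2 + 1 := by omega
    subst hy1
    have hf : (0:ℚ) < (q:ℚ) ^ y2 * ((q:ℚ) ^ (y2+1) - 1) := by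
      have h1 : (1:ℚ) < (q:ℚ) ^ (y2+1) := by
        calc (1:ℚ) = (q:ℚ) ^ (0:ℤ) := (zpow_zero _).symm
          _ < (q:ℚ) ^ (y2+1) := zpow_lt_zpow_right₀ hQ (by omega)
      have h2 : (0:ℚ) < (q:ℚ) ^ y2 := zpow_pos (by positivity) _
      nlinarith
    have hX := qBin_succ_mul hQ hy2a (show y2 + 1 ≤ v - k by omega)
    have hY := qBin_succ_mul hQ hy2a (show y2 + 1 ≤ m by omega)
    apply stmt16_key _ _ _ _ _ _ _ _ ((q:ℚ) ^ c * ((q:ℚ) ^ (c+1) - 1))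
      ((q:ℚ) ^ y2 * ((q:ℚ) ^ (y2+1) - 1)) _ _
      ((q:ℚ) ^ k - (q:ℚ) ^ c) ((q:ℚ) ^ (k - m) - (q:ℚ) ^ c)
      ((q:ℚ) ^ (v - k) - (q:ℚ) ^ y2) ((q:ℚ) ^ m - (q:ℚ) ^ y2)
      (qBin_pos hQ hy2a (by omega)) (qBin_pos hQ hc0 (by omega))
      (qBin_pos hQ hc0 (by omega)) (qBin_pos hQ (by omega) (by omega))
      (qBin_pos hQ (by omega) (by omega)) (qBin_pos hQ hy2a (by omega))
      he hf (zpow_pos (by positivity) _) (zpow_pos (by positivity) _)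
      hA hB hX hY
    -- kx * kb ≤ ky * ka * s
    have hy2pos : (0:ℚ) < (q:ℚ) ^ y2 := zpow_pos (by positivity) _
    have f1 : (q:ℚ) ^ (v - k) = (q:ℚ) ^ (m - 1) * (q:ℚ) ^ (v - k - m) * (q:ℚ) := by
      calc (q:ℚ) ^ (v - k) = (q:ℚ) ^ ((m - 1) + (v - k - m) + 1) := by congr 1; ring
        _ = _ := by rw [zpow_add₀ hq0, zpow_add₀ hq0, zpow_one]
    have f2 : (q:ℚ) * ((q:ℚ) ^ (k - m) - (q:ℚ) ^ c) ≤ (q:ℚ) ^ k - (q:ℚ) ^ c := by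
      have e1 : (q:ℚ) * (q:ℚ) ^ (k - m) = (q:ℚ) ^ (k - m + 1) := by
        rw [zpow_add₀ hq0, zpow_one]; ring
      have e2 : (q:ℚ) * (q:ℚ) ^ c = (q:ℚ) ^ (c + 1) := by
        rw [zpow_add₀ hq0, zpow_one]; ring
      have l1 : (q:ℚ) ^ (k - m + 1) ≤ (q:ℚ) ^ k := zpow_le_zpow_right₀ hQ1 (by omega)
      have l2 : (q:ℚ) ^ c ≤ (q:ℚ) ^ (c + 1) := zpow_le_zpow_right₀ hQ1 (by omega)
      have : (q:ℚ) * ((q:ℚ) ^ (k - m) - (q:ℚ) ^ c)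
          = (q:ℚ) ^ (k - m + 1) - (q:ℚ) ^ (c + 1) := by rw [← e1, ← e2]; ring
      linarith
    have f3 : (q:ℚ) ^ (m - 1) ≤ (q:ℚ) ^ m - (q:ℚ) ^ y2 := by
      have l1 : (q:ℚ) ^ y2 ≤ (q:ℚ) ^ (m - 1) := zpow_le_zpow_right₀ hQ1 (by omega)
      have e1 : (q:ℚ) ^ m = (q:ℚ) * (q:ℚ) ^ (m - 1) := by
        calc (q:ℚ) ^ m = (q:ℚ) ^ (1 + (m - 1)) := by congr 1; ring
          _ = _ := by rw [zpow_add₀ hq0, zpow_one]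
      have h2 : (0:ℚ) < (q:ℚ) ^ (m - 1) := zpow_pos (by positivity) _
      nlinarith
    have hs0' : (0:ℚ) ≤ (q:ℚ) ^ (v - k - m) := by positivity
    have hm1 : (0:ℚ) < (q:ℚ) ^ (m - 1) := zpow_pos (by positivity) _
    calc ((q:ℚ) ^ (v - k) - (q:ℚ) ^ y2) * ((q:ℚ) ^ (k - m) - (q:ℚ) ^ c)
        ≤ (q:ℚ) ^ (v - k) * ((q:ℚ) ^ (k - m) - (q:ℚ) ^ c) :=
          mul_le_mul_of_nonneg_right (by linarith) hkb0
      _ = (q:ℚ) ^ (m - 1) * (q:ℚ) ^ (v - k - m)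
            * ((q:ℚ) * ((q:ℚ) ^ (k - m) - (q:ℚ) ^ c)) := by rw [f1]; ring
      _ ≤ (q:ℚ) ^ (m - 1) * (q:ℚ) ^ (v - k - m) * ((q:ℚ) ^ k - (q:ℚ) ^ c) :=
          mul_le_mul_of_nonneg_left f2 (by positivity)
      _ ≤ ((q:ℚ) ^ m - (q:ℚ) ^ y2) * ((q:ℚ) ^ k - (q:ℚ) ^ c) * (q:ℚ) ^ (v - k - m) := by
          nlinarith [mul_nonneg (mul_nonneg (sub_nonneg.mpr f3) hka0) hs0']
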